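/- Total-correctness completeness of the trace-based Hoare logic: for any While statement s, state predicate U and setoid trace predicate P, if for every state σ with U σ there exists a trace τ such that (s,σ) ⇒ τ and τ satisfies P, then ⊢{U} s {P} is derivable. -/

import Mathlib

namespace WhileTrace

/-- Program variables. -/
abbrev Var := ℕ
/-- States assign integer values to variables. -/
abbrev State := Var → ℤ
/-- Arithmetic expressions, modelled by their integer value in each state. -/
abbrev Expr := State → ℤ

/-- State update `σ[x ↦ v]`. -/
def update (σ : State) (x : Var) (v : ℤ) : State := Function.update σ x v

/-- Reading an expression as a boolean: `σ ⊨ e`. -/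
def istrue (e : Expr) (σ : State) : Prop := e σ ≠ 0

/-- Traces: nonempty, possibly infinite sequences of states
(a head state together with a possibly infinite sequence of further states). -/
def Trace : Type := State × Stream'.Seq State

/-- The singleton trace `⟨σ⟩`. -/
def Trace.single (σ : State) : Trace := (σ, Stream'.Seq.nil)

/-- The cons trace `σ :: τ`. -/
def Trace.cons (σ : State) (τ : Trace) : Trace := (σ, Stream'.Seq.cons τ.1 τ.2)

/-- The first state of a trace. -/
def Trace.hd (τ : Trace) : State := τ.1

/-- Bisimilarity of traces `τ ≈ τ'`, as a greatest fixed point: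
there is a relation `R` relating the two traces that is consistent with the
coinductive rules `⟨σ⟩ ≈ ⟨σ⟩` and `σ::τ ≈ σ::τ'` whenever `τ ≈ τ'`. -/
def Bisim (τ τ' : Trace) : Prop :=
  ∃ R : Trace → Trace → Prop, R τ τ' ∧
    ∀ a b, R a b →
      (∃ σ, a = Trace.single σ ∧ b = Trace.single σ) ∨
      (∃ σ a' b', a = Trace.cons σ a' ∧ b = Trace.cons σ b' ∧ R a' b')

/-- Finiteness `τ ↓ σ` : `τ` is finite with last state `σ` (inductive). -/
inductive Converges : Trace → State → Prop
  | single (σ : State) : Converges (Trace.single σ) σ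
  | cons (σ' : State) {τ : Trace} {σ : State} :
      Converges τ σ → Converges (Trace.cons σ' τ) σ

/-- Infiniteness of a trace (coinductive, as a greatest fixed point). -/
def InfiniteT (τ : Trace) : Prop :=
  ∃ P : Trace → Prop, P τ ∧ ∀ a, P a → ∃ σ a', a = Trace.cons σ a' ∧ P a'

/-- Statements of the While language. -/
inductive Stmt : Type
  | assign (x : Var) (e : Expr)
  | skip
  | seq (s₀ s₁ : Stmt)
  | ifte (e : Expr) (st sf : Stmt)
  | whileDo (e : Expr) (st : Stmt)

/-- A pair of relations `(E, ES)` is consistent with the rules of evaluation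
and extended evaluation: every claimed evaluation is backed by one of the
coinductive rules, with premises again in `(E, ES)`. -/
def EvalConsistent (E : Stmt → State → Trace → Prop)
    (ES : Stmt → Trace → Trace → Prop) : Prop :=
  (∀ x e σ τ, E (.assign x e) σ τ →
      τ = Trace.cons σ (Trace.single (update σ x (e σ)))) ∧
  (∀ σ τ, E .skip σ τ → τ = Trace.single σ) ∧
  (∀ s₀ s₁ σ τ', E (.seq s₀ s₁) σ τ' → ∃ τ, E s₀ σ τ ∧ ES s₁ τ τ') ∧
  (∀ e st sf σ τ, E (.ifte e st sf) σ τ →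
      (istrue e σ ∧ ES st (Trace.cons σ (Trace.single σ)) τ) ∨
      (¬ istrue e σ ∧ ES sf (Trace.cons σ (Trace.single σ)) τ)) ∧
  (∀ e st σ τ', E (.whileDo e st) σ τ' →
      (istrue e σ ∧ ∃ τ, ES st (Trace.cons σ (Trace.single σ)) τ ∧
        ES (.whileDo e st) τ τ') ∨
      (¬ istrue e σ ∧ τ' = Trace.cons σ (Trace.single σ))) ∧
  (∀ s τ τ', ES s τ τ' →
      (∃ σ, τ = Trace.single σ ∧ E s σ τ') ∨
      (∃ σ τ₀ τ₀', τ = Trace.cons σ τ₀ ∧ τ' = Trace.cons σ τ₀' ∧ ES s τ₀ τ₀'))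

/-- Evaluation `(s,σ) ⇒ τ` : greatest fixed point of the mutual coinductive rules. -/
def Exec (s : Stmt) (σ : State) (τ : Trace) : Prop :=
  ∃ E ES, EvalConsistent E ES ∧ E s σ τ

/-- Extended evaluation `(s,τ) ⇒* τ'`. -/
def ExecSeq (s : Stmt) (τ τ' : Trace) : Prop :=
  ∃ E ES, EvalConsistent E ES ∧ ES s τ τ'

/-- The standard inductive state-based big-step semantics `(s,σ) ⇓ σ'`. -/
inductive BigStep : Stmt → State → State → Prop
  | assign (x : Var) (e : Expr) (σ : State) :
      BigStep (.assign x e) σ (update σ x (e σ))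
  | skip (σ : State) : BigStep .skip σ σ
  | seq {s₀ s₁ : Stmt} {σ σ' σ'' : State} :
      BigStep s₀ σ σ' → BigStep s₁ σ' σ'' → BigStep (.seq s₀ s₁) σ σ''
  | ifTrue {e : Expr} {st sf : Stmt} {σ σ' : State} :
      istrue e σ → BigStep st σ σ' → BigStep (.ifte e st sf) σ σ'
  | ifFalse {e : Expr} {st sf : Stmt} {σ σ' : State} :
      ¬ istrue e σ → BigStep sf σ σ' → BigStep (.ifte e st sf) σ σ'
  | whileTrue {e : Expr} {st : Stmt} {σ σ' σ'' : State} :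
      istrue e σ → BigStep st σ σ' → BigStep (.whileDo e st) σ' σ'' →
      BigStep (.whileDo e st) σ σ''
  | whileFalse {e : Expr} {st : Stmt} {σ : State} :
      ¬ istrue e σ → BigStep (.whileDo e st) σ σ

/-- State predicates. -/
abbrev StatePred := State → Prop
/-- Trace predicates. -/
abbrev TracePred := Trace → Prop

/-- A setoid trace predicate respects bisimilarity. -/
def IsSetoidPred (P : TracePred) : Prop := ∀ τ τ', P τ → Bisim τ τ' → P τ'

/-- The singleton predicate `[U]`. -/
def Sglt (U : StatePred) : TracePred :=
  fun τ => ∃ σ, U σ ∧ τ = Trace.single σ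

/-- The doubleton predicate `⟨U⟩`. -/
def Dup (U : StatePred) : TracePred :=
  fun τ => ∃ σ, U σ ∧ τ = Trace.cons σ (Trace.single σ)

/-- The update predicate `U[x ↦ e]`. -/
def UpdPred (U : StatePred) (x : Var) (e : Expr) : TracePred :=
  fun τ => ∃ σ, U σ ∧ τ = Trace.cons σ (Trace.single (update σ x (e σ)))

/-- `Q follows τ in τ'` (coinductive, as a greatest fixed point). -/
def Follows (Q : TracePred) (τ τ' : Trace) : Prop :=
  ∃ R : Trace → Trace → Prop, R τ τ' ∧
    ∀ a b, R a b →
      (∃ σ, a = Trace.single σ ∧ b.hd = σ ∧ Q b) ∨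
      (∃ σ a' b', a = Trace.cons σ a' ∧ b = Trace.cons σ b' ∧ R a' b')

/-- The chop `P ** Q`. -/
def Chop (P Q : TracePred) : TracePred :=
  fun τ' => ∃ τ, P τ ∧ Follows Q τ τ'

/-- The iteration `P*` (coinductive, as a greatest fixed point). -/
def Iter (P : TracePred) : TracePred := fun τ =>
  ∃ X : TracePred, X τ ∧
    ∀ a, X a → Sglt (fun _ => True) a ∨ ∃ τ₀, P τ₀ ∧ Follows X τ₀ a

/-- `Last P` : states that are the last state of some finite trace satisfying `P`. -/
def Last (P : TracePred) : StatePred := fun σ => ∃ τ, P τ ∧ Converges τ σ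

/-- The trace predicate `finite`. -/
def FiniteT : TracePred := fun τ => ∃ σ, Converges τ σ

/-- Derivability `⊢ {U} s {P}` in the trace-based Hoare logic. -/
inductive THoare : StatePred → Stmt → TracePred → Prop
  | assign (U : StatePred) (x : Var) (e : Expr) :
      THoare U (.assign x e) (UpdPred U x e)
  | skip (U : StatePred) : THoare U .skip (Sglt U)
  | seq {U V : StatePred} {s₀ s₁ : Stmt} {P Q : TracePred} :
      THoare U s₀ (Chop P (Sglt V)) → THoare V s₁ Q →
      THoare U (.seq s₀ s₁) (Chop P Q)
  | ifte {U : StatePred} {e : Expr} {st sf : Stmt} {P : TracePred} :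
      THoare (fun σ => istrue e σ ∧ U σ) st P →
      THoare (fun σ => ¬ istrue e σ ∧ U σ) sf P →
      THoare U (.ifte e st sf) (Chop (Dup U) P)
  | whileDo {U I : StatePred} {e : Expr} {st : Stmt} {P : TracePred} :
      (∀ σ, U σ → I σ) →
      THoare (fun σ => istrue e σ ∧ I σ) st (Chop P (Sglt I)) →
      THoare U (.whileDo e st)
        (Chop (Dup U)
          (Chop (Iter (Chop P (Dup I))) (Sglt (fun σ => ¬ istrue e σ))))
  | conseq {U U' : StatePred} {s : Stmt} {P P' : TracePred} :
      (∀ σ, U σ → U' σ) → THoare U' s P' → (∀ τ, P' τ → P τ) →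
      THoare U s P
  | exist {Z : Type} {U : Z → StatePred} {s : Stmt} {P : Z → TracePred} :
      (∀ z, THoare (U z) s (P z)) →
      THoare (fun σ => ∃ z, U z σ) s (fun τ => ∃ z, P z τ)

/-- Derivability `⊢p {U} s {Z}` in the state-based partial-correctness Hoare logic. -/
inductive PHoare : StatePred → Stmt → StatePred → Prop
  | assign (Z : StatePred) (x : Var) (e : Expr) :
      PHoare (fun σ => Z (update σ x (e σ))) (.assign x e) Z
  | skip (U : StatePred) : PHoare U .skip U
  | seq {U V Z : StatePred} {s₀ s₁ : Stmt} :
      PHoare U s₀ V → PHoare V s₁ Z → PHoare U (.seq s₀ s₁) Z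
  | ifte {U Z : StatePred} {e : Expr} {st sf : Stmt} :
      PHoare (fun σ => istrue e σ ∧ U σ) st Z →
      PHoare (fun σ => ¬ istrue e σ ∧ U σ) sf Z →
      PHoare U (.ifte e st sf) Z
  | whileDo {I : StatePred} {e : Expr} {st : Stmt} :
      PHoare (fun σ => istrue e σ ∧ I σ) st I →
      PHoare I (.whileDo e st) (fun σ => I σ ∧ ¬ istrue e σ)
  | exist {Z : Type} {U V : Z → StatePred} {s : Stmt} :
      (∀ z, PHoare (U z) s (V z)) →
      PHoare (fun σ => ∃ z, U z σ) s (fun σ => ∃ z, V z σ)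
  | conseq {U U' Z Z' : StatePred} {s : Stmt} :
      (∀ σ, U σ → U' σ) → PHoare U' s Z' → (∀ σ, Z' σ → Z σ) →
      PHoare U s Z

/-- Derivability `⊢t {U} s {Z}` in the state-based total-correctness Hoare
logic, with the `while-fun` rule. -/
inductive TotHoare : StatePred → Stmt → StatePred → Prop
  | assign (Z : StatePred) (x : Var) (e : Expr) :
      TotHoare (fun σ => Z (update σ x (e σ))) (.assign x e) Z
  | skip (U : StatePred) : TotHoare U .skip U
  | seq {U V Z : StatePred} {s₀ s₁ : Stmt} :
      TotHoare U s₀ V → TotHoare V s₁ Z → TotHoare U (.seq s₀ s₁) Z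
  | ifte {U Z : StatePred} {e : Expr} {st sf : Stmt} :
      TotHoare (fun σ => istrue e σ ∧ U σ) st Z →
      TotHoare (fun σ => ¬ istrue e σ ∧ U σ) sf Z →
      TotHoare U (.ifte e st sf) Z
  | whileFun {I : StatePred} {e : Expr} {st : Stmt} (t : State → ℕ) (m : ℕ) :
      (∀ n : ℕ, TotHoare (fun σ => istrue e σ ∧ I σ ∧ t σ = n) st
        (fun σ => I σ ∧ t σ < n)) →
      TotHoare (fun σ => I σ ∧ t σ = m) (.whileDo e st)
        (fun σ => I σ ∧ t σ ≤ m ∧ ¬ istrue e σ)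
  | exist {Z : Type} {U V : Z → StatePred} {s : Stmt} :
      (∀ z, TotHoare (U z) s (V z)) →
      TotHoare (fun σ => ∃ z, U z σ) s (fun σ => ∃ z, V z σ)
  | conseq {U U' Z Z' : StatePred} {s : Stmt} :
      (∀ σ, U σ → U' σ) → TotHoare U' s Z' → (∀ σ, Z' σ → Z σ) →
      TotHoare U s Z

/-! ### Auxiliary development for the completeness proof -/



lemma single_ne_cons (σ σ' : State) (τ : Trace) : Trace.single σ ≠ Trace.cons σ' τ := by
  intro h
  have := congrArg (fun t : Trace => (t.2).get? 0) h
  simp [Trace.single, Trace.cons] at this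

lemma single_inj {σ σ' : State} (h : Trace.single σ = Trace.single σ') : σ = σ' :=
  congrArg Prod.fst h

lemma cons_inj {σ σ' : State} {τ τ' : Trace} (h : Trace.cons σ τ = Trace.cons σ' τ') :
    σ = σ' ∧ τ = τ' := by
  have h1 := congrArg Prod.fst h
  have h2 := congrArg Prod.snd h
  simp [Trace.cons] at h1 h2
  obtain ⟨ha, hb⟩ := h2
  exact ⟨h1, Prod.ext ha hb⟩

lemma trace_cases (τ : Trace) : (∃ σ, τ = Trace.single σ) ∨ ∃ σ τ', τ = Trace.cons σ τ' := by
  obtain ⟨σ, s⟩ := τ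
  refine Stream'.Seq.recOn
    (motive := fun s => ((∃ σ', (σ, s) = Trace.single σ') ∨ ∃ σ' τ', (σ, s) = Trace.cons σ' τ')) s ?_ ?_
  · exact Or.inl ⟨σ, rfl⟩
  · exact fun x s' => Or.inr ⟨σ, (x, s'), rfl⟩

@[simp] lemma hd_single (σ : State) : (Trace.single σ).hd = σ := rfl
@[simp] lemma hd_cons (σ : State) (τ : Trace) : (Trace.cons σ τ).hd = σ := rfl

/-! #### Follows and Iter -/

lemma follows_dest {Q : TracePred} {τ τ' : Trace} (h : Follows Q τ τ') :
    (∃ σ, τ = Trace.single σ ∧ τ'.hd = σ ∧ Q τ') ∨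
    (∃ σ t t', τ = Trace.cons σ t ∧ τ' = Trace.cons σ t' ∧ Follows Q t t') := by
  obtain ⟨R, hR, hc⟩ := h
  rcases hc _ _ hR with h | ⟨σ, a', b', h1, h2, h3⟩
  · exact Or.inl h
  · exact Or.inr ⟨σ, a', b', h1, h2, R, h3, hc⟩

lemma follows_single {Q : TracePred} {σ : State} {τ' : Trace}
    (h1 : τ'.hd = σ) (h2 : Q τ') : Follows Q (Trace.single σ) τ' :=
  ⟨fun a b => a = Trace.single σ ∧ b = τ', ⟨rfl, rfl⟩, by
    rintro a b ⟨rfl, rfl⟩; exact Or.inl ⟨σ, rfl, h1, h2⟩⟩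

lemma follows_cons {Q : TracePred} {τ τ' : Trace} (σ : State) (h : Follows Q τ τ') :
    Follows Q (Trace.cons σ τ) (Trace.cons σ τ') := by
  obtain ⟨R, hR, hc⟩ := h
  refine ⟨fun a b => R a b ∨ (a = Trace.cons σ τ ∧ b = Trace.cons σ τ'), Or.inr ⟨rfl, rfl⟩, ?_⟩
  rintro a b (hab | ⟨rfl, rfl⟩)
  · rcases hc a b hab with h | ⟨σ', a', b', h1, h2, h3⟩
    · exact Or.inl h
    · exact Or.inr ⟨σ', a', b', h1, h2, Or.inl h3⟩
  · exact Or.inr ⟨σ, τ, τ', rfl, rfl, Or.inl hR⟩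

lemma follows_hd {Q : TracePred} {τ τ' : Trace} (h : Follows Q τ τ') : τ'.hd = τ.hd := by
  rcases follows_dest h with ⟨σ, rfl, h1, _⟩ | ⟨σ, t, t', rfl, rfl, _⟩
  · exact h1
  · rfl

lemma follows_mono {Q Q' : TracePred} (hQ : ∀ a, Q a → Q' a) {τ τ' : Trace}
    (h : Follows Q τ τ') : Follows Q' τ τ' := by
  obtain ⟨R, hR, hc⟩ := h
  refine ⟨R, hR, fun a b hab => ?_⟩
  rcases hc a b hab with ⟨σ, h1, h2, h3⟩ | h
  · exact Or.inl ⟨σ, h1, h2, hQ _ h3⟩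
  · exact Or.inr h

lemma follows_self {Q : TracePred} {τ : Trace}
    (h : ∀ σ, Converges τ σ → Q (Trace.single σ)) : Follows Q τ τ := by
  refine ⟨fun a b => a = b ∧ ∀ σ, Converges a σ → Q (Trace.single σ), ⟨rfl, h⟩, ?_⟩
  rintro a b ⟨rfl, hq⟩
  rcases trace_cases a with ⟨σ, rfl⟩ | ⟨σ, t, rfl⟩
  · exact Or.inl ⟨σ, rfl, rfl, hq σ (Converges.single σ)⟩
  · exact Or.inr ⟨σ, t, t, rfl, rfl, rfl, fun σ' hc => hq σ' (Converges.cons σ hc)⟩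

lemma iter_dest {P : TracePred} {τ : Trace} (h : Iter P τ) :
    (∃ σ, τ = Trace.single σ) ∨ ∃ τ₀, P τ₀ ∧ Follows (Iter P) τ₀ τ := by
  obtain ⟨X, hX, hc⟩ := h
  rcases hc _ hX with ⟨σ, _, rfl⟩ | ⟨τ₀, hP, hF⟩
  · exact Or.inl ⟨σ, rfl⟩
  · exact Or.inr ⟨τ₀, hP, follows_mono (fun a ha => ⟨X, ha, hc⟩) hF⟩

/-! #### Exec destructors -/

lemma exec_assign_dest {x : Var} {e : Expr} {σ : State} {τ : Trace}
    (h : Exec (.assign x e) σ τ) :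
    τ = Trace.cons σ (Trace.single (update σ x (e σ))) := by
  obtain ⟨E, ES, hc, hE⟩ := h; exact hc.1 _ _ _ _ hE

lemma exec_skip_dest {σ : State} {τ : Trace} (h : Exec .skip σ τ) : τ = Trace.single σ := by
  obtain ⟨E, ES, hc, hE⟩ := h; exact hc.2.1 _ _ hE

lemma exec_seq_dest {s₀ s₁ : Stmt} {σ : State} {τ' : Trace} (h : Exec (.seq s₀ s₁) σ τ') :
    ∃ τ, Exec s₀ σ τ ∧ ExecSeq s₁ τ τ' := by
  obtain ⟨E, ES, hc, hE⟩ := h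
  obtain ⟨τ, h1, h2⟩ := hc.2.2.1 _ _ _ _ hE
  exact ⟨τ, ⟨E, ES, hc, h1⟩, ⟨E, ES, hc, h2⟩⟩

lemma exec_ifte_dest {e : Expr} {st sf : Stmt} {σ : State} {τ : Trace}
    (h : Exec (.ifte e st sf) σ τ) :
    (istrue e σ ∧ ExecSeq st (Trace.cons σ (Trace.single σ)) τ) ∨
    (¬ istrue e σ ∧ ExecSeq sf (Trace.cons σ (Trace.single σ)) τ) := by
  obtain ⟨E, ES, hc, hE⟩ := h
  rcases hc.2.2.2.1 _ _ _ _ _ hE with ⟨he, hs⟩ | ⟨he, hs⟩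
  · exact Or.inl ⟨he, E, ES, hc, hs⟩
  · exact Or.inr ⟨he, E, ES, hc, hs⟩

lemma exec_while_dest {e : Expr} {st : Stmt} {σ : State} {τ' : Trace}
    (h : Exec (.whileDo e st) σ τ') :
    (istrue e σ ∧ ∃ τ, ExecSeq st (Trace.cons σ (Trace.single σ)) τ ∧
      ExecSeq (.whileDo e st) τ τ') ∨
    (¬ istrue e σ ∧ τ' = Trace.cons σ (Trace.single σ)) := by
  obtain ⟨E, ES, hc, hE⟩ := h
  rcases hc.2.2.2.2.1 _ _ _ _ hE with ⟨he, τ, h1, h2⟩ | h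
  · exact Or.inl ⟨he, τ, ⟨E, ES, hc, h1⟩, ⟨E, ES, hc, h2⟩⟩
  · exact Or.inr h

lemma execSeq_dest {s : Stmt} {τ τ' : Trace} (h : ExecSeq s τ τ') :
    (∃ σ, τ = Trace.single σ ∧ Exec s σ τ') ∨
    (∃ σ t t', τ = Trace.cons σ t ∧ τ' = Trace.cons σ t' ∧ ExecSeq s t t') := by
  obtain ⟨E, ES, hc, hES⟩ := h
  rcases hc.2.2.2.2.2 _ _ _ hES with ⟨σ, h1, h2⟩ | ⟨σ, t, t', h1, h2, h3⟩
  · exact Or.inl ⟨σ, h1, E, ES, hc, h2⟩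
  · exact Or.inr ⟨σ, t, t', h1, h2, E, ES, hc, h3⟩

/-! #### A generic extension principle for building executions coinductively -/

/-- Union with `Exec`. -/
def EE (N : Stmt → State → Trace → Prop) : Stmt → State → Trace → Prop :=
  fun s σ τ => Exec s σ τ ∨ N s σ τ

/-- Union with `ExecSeq`. -/
def ESE (M : Stmt → Trace → Trace → Prop) : Stmt → Trace → Trace → Prop :=
  fun s τ τ' => ExecSeq s τ τ' ∨ M s τ τ'

lemma consistent_extend (N : Stmt → State → Trace → Prop) (M : Stmt → Trace → Trace → Prop)
    (h1 : ∀ x e σ τ, N (.assign x e) σ τ →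
        τ = Trace.cons σ (Trace.single (update σ x (e σ))))
    (h2 : ∀ σ τ, N .skip σ τ → τ = Trace.single σ)
    (h3 : ∀ s₀ s₁ σ τ', N (.seq s₀ s₁) σ τ' → ∃ τ, EE N s₀ σ τ ∧ ESE M s₁ τ τ')
    (h4 : ∀ e st sf σ τ, N (.ifte e st sf) σ τ →
        (istrue e σ ∧ ESE M st (Trace.cons σ (Trace.single σ)) τ) ∨
        (¬ istrue e σ ∧ ESE M sf (Trace.cons σ (Trace.single σ)) τ))
    (h5 : ∀ e st σ τ', N (.whileDo e st) σ τ' →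
        (istrue e σ ∧ ∃ τ, ESE M st (Trace.cons σ (Trace.single σ)) τ ∧
          ESE M (.whileDo e st) τ τ') ∨
        (¬ istrue e σ ∧ τ' = Trace.cons σ (Trace.single σ)))
    (h6 : ∀ s τ τ', M s τ τ' →
        (∃ σ, τ = Trace.single σ ∧ EE N s σ τ') ∨
        (∃ σ t t', τ = Trace.cons σ t ∧ τ' = Trace.cons σ t' ∧ ESE M s t t')) :
    EvalConsistent (EE N) (ESE M) := by
  refine ⟨?_, ?_, ?_, ?_, ?_, ?_⟩
  · rintro x e σ τ (h | h)
    · exact exec_assign_dest h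
    · exact h1 _ _ _ _ h
  · rintro σ τ (h | h)
    · exact exec_skip_dest h
    · exact h2 _ _ h
  · rintro s₀ s₁ σ τ' (h | h)
    · obtain ⟨τ, ha, hb⟩ := exec_seq_dest h
      exact ⟨τ, Or.inl ha, Or.inl hb⟩
    · exact h3 _ _ _ _ h
  · rintro e st sf σ τ (h | h)
    · rcases exec_ifte_dest h with ⟨he, hs⟩ | ⟨he, hs⟩
      · exact Or.inl ⟨he, Or.inl hs⟩
      · exact Or.inr ⟨he, Or.inl hs⟩
    · exact h4 _ _ _ _ _ h
  · rintro e st σ τ' (h | h)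
    · rcases exec_while_dest h with ⟨he, τ, ha, hb⟩ | hf
      · exact Or.inl ⟨he, τ, Or.inl ha, Or.inl hb⟩
      · exact Or.inr hf
    · exact h5 _ _ _ _ h
  · rintro s τ τ' (h | h)
    · rcases execSeq_dest h with ⟨σ, ha, hb⟩ | ⟨σ, t, t', ha, hb, hcns⟩
      · exact Or.inl ⟨σ, ha, Or.inl hb⟩
      · exact Or.inr ⟨σ, t, t', ha, hb, Or.inl hcns⟩
    · exact h6 _ _ _ h

/-! #### Exec constructors (fold) -/

/-- One application of the evaluation rules. -/
inductive EStep : Stmt → State → Trace → Prop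
  | assign (x : Var) (e : Expr) (σ : State) :
      EStep (.assign x e) σ (Trace.cons σ (Trace.single (update σ x (e σ))))
  | skip (σ : State) : EStep .skip σ (Trace.single σ)
  | seq {s₀ s₁ : Stmt} {σ : State} {τ τ' : Trace} :
      Exec s₀ σ τ → ExecSeq s₁ τ τ' → EStep (.seq s₀ s₁) σ τ'
  | ifT {e : Expr} {st sf : Stmt} {σ : State} {τ : Trace} :
      istrue e σ → ExecSeq st (Trace.cons σ (Trace.single σ)) τ → EStep (.ifte e st sf) σ τ
  | ifF {e : Expr} {st sf : Stmt} {σ : State} {τ : Trace} :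
      ¬ istrue e σ → ExecSeq sf (Trace.cons σ (Trace.single σ)) τ → EStep (.ifte e st sf) σ τ
  | whT {e : Expr} {st : Stmt} {σ : State} {τ τ' : Trace} :
      istrue e σ → ExecSeq st (Trace.cons σ (Trace.single σ)) τ →
      ExecSeq (.whileDo e st) τ τ' → EStep (.whileDo e st) σ τ'
  | whF {e : Expr} {st : Stmt} {σ : State} :
      ¬ istrue e σ → EStep (.whileDo e st) σ (Trace.cons σ (Trace.single σ))

/-- One application of the extended evaluation rules. -/
inductive ESStep : Stmt → Trace → Trace → Prop
  | single {s : Stmt} {σ : State} {τ : Trace} : Exec s σ τ → ESStep s (Trace.single σ) τ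
  | cons {s : Stmt} {τ τ' : Trace} (σ : State) :
      ExecSeq s τ τ' → ESStep s (Trace.cons σ τ) (Trace.cons σ τ')

lemma estep_consistent : EvalConsistent (EE EStep) (ESE ESStep) := by
  refine consistent_extend _ _ ?_ ?_ ?_ ?_ ?_ ?_
  · rintro x e σ τ h; cases h; rfl
  · rintro σ τ h; cases h; rfl
  · rintro s₀ s₁ σ τ' h
    cases h with
    | seq ha hb => exact ⟨_, Or.inl ha, Or.inl hb⟩
  · rintro e st sf σ τ h
    cases h with
    | ifT he hs => exact Or.inl ⟨he, Or.inl hs⟩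
    | ifF he hs => exact Or.inr ⟨he, Or.inl hs⟩
  · rintro e st σ τ' h
    cases h with
    | whT he ha hb => exact Or.inl ⟨he, _, Or.inl ha, Or.inl hb⟩
    | whF he => exact Or.inr ⟨he, rfl⟩
  · rintro s τ τ' h
    cases h with
    | single ha => exact Or.inl ⟨_, rfl, Or.inl ha⟩
    | cons σ ha => exact Or.inr ⟨σ, _, _, rfl, rfl, Or.inl ha⟩

lemma exec_fold {s : Stmt} {σ : State} {τ : Trace} (h : EStep s σ τ) : Exec s σ τ :=
  ⟨EE EStep, ESE ESStep, estep_consistent, Or.inr h⟩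

lemma execSeq_fold {s : Stmt} {τ τ' : Trace} (h : ESStep s τ τ') : ExecSeq s τ τ' :=
  ⟨EE EStep, ESE ESStep, estep_consistent, Or.inr h⟩

/-! #### Head lemmas -/

lemma execSeq_hd_of {s : Stmt} (h : ∀ σ τ, Exec s σ τ → τ.hd = σ)
    {τ τ' : Trace} (hes : ExecSeq s τ τ') : τ'.hd = τ.hd := by
  rcases execSeq_dest hes with ⟨σ, rfl, he⟩ | ⟨σ, t, t', rfl, rfl, _⟩
  · exact h _ _ he
  · rfl

lemma exec_hd : ∀ (s : Stmt) {σ : State} {τ : Trace}, Exec s σ τ → τ.hd = σ := by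
  intro s
  induction s with
  | assign x e => intro σ τ h; rw [exec_assign_dest h]; rfl
  | skip => intro σ τ h; rw [exec_skip_dest h]; rfl
  | seq s₀ s₁ ih₀ ih₁ =>
    intro σ τ h
    obtain ⟨t, h0, h1⟩ := exec_seq_dest h
    rw [execSeq_hd_of (fun _ _ hh => ih₁ hh) h1, ih₀ h0]
  | ifte e st sf ihT ihF =>
    intro σ τ h
    rcases exec_ifte_dest h with ⟨_, hs⟩ | ⟨_, hs⟩
    · rw [execSeq_hd_of (fun _ _ hh => ihT hh) hs]; rfl
    · rw [execSeq_hd_of (fun _ _ hh => ihF hh) hs]; rfl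
  | whileDo e st ih =>
    intro σ τ h
    rcases exec_while_dest h with ⟨_, τm, hm, hw⟩ | ⟨_, rfl⟩
    · rcases execSeq_dest hm with ⟨σ₁, heq, _⟩ | ⟨σ₁, t, t', heq, rfl, _⟩
      · exact absurd heq.symm (single_ne_cons _ _ _)
      · rcases execSeq_dest hw with ⟨σ₂, heq2, _⟩ | ⟨σ₂, u, u', heq2, rfl, _⟩
        · exact absurd heq2.symm (single_ne_cons _ _ _)
        · obtain ⟨e1, _⟩ := cons_inj heq
          obtain ⟨e2, _⟩ := cons_inj heq2
          simp [Trace.hd, ← e1, ← e2, Trace.cons]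
    · rfl

/-! #### Determinism up to bisimilarity -/

/-- Pairs of traces that ought to be bisimilar by determinism. -/
inductive DetB : Trace → Trace → Prop
  | refl (τ : Trace) : DetB τ τ
  | epair {s : Stmt} {σ : State} {τ τ' : Trace} :
      Exec s σ τ → Exec s σ τ' → DetB τ τ'
  | espair {s : Stmt} {τ₀ τ₀' τ τ' : Trace} :
      ExecSeq s τ₀ τ → ExecSeq s τ₀' τ' → DetB τ₀ τ₀' → DetB τ τ'

/-- One-step matching of a pair of traces. -/
def StepD (τ τ' : Trace) : Prop :=
  (∃ σ, τ = Trace.single σ ∧ τ' = Trace.single σ) ∨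
  (∃ σ t t', τ = Trace.cons σ t ∧ τ' = Trace.cons σ t' ∧ DetB t t')

lemma stepD_exec : ∀ (s : Stmt) {σ : State} {τ τ' : Trace},
    Exec s σ τ → Exec s σ τ' → StepD τ τ' := by
  intro s
  induction s with
  | assign x e =>
    intro σ τ τ' h h'
    rw [exec_assign_dest h, exec_assign_dest h']
    exact Or.inr ⟨σ, _, _, rfl, rfl, DetB.refl _⟩
  | skip =>
    intro σ τ τ' h h'
    rw [exec_skip_dest h, exec_skip_dest h']
    exact Or.inl ⟨σ, rfl, rfl⟩
  | seq s₀ s₁ ih₀ ih₁ =>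
    intro σ τ τ' h h'
    obtain ⟨t₀, e₀, es₀⟩ := exec_seq_dest h
    obtain ⟨t₀', e₀', es₀'⟩ := exec_seq_dest h'
    rcases ih₀ e₀ e₀' with ⟨σ₀, rfl, rfl⟩ | ⟨σ₀, u, u', rfl, rfl, hB⟩
    · rcases execSeq_dest es₀ with ⟨σ₁, heq, hE⟩ | ⟨σ₁, t, t', heq, _, _⟩
      · rcases execSeq_dest es₀' with ⟨σ₂, heq2, hE'⟩ | ⟨σ₂, v, v', heq2, _, _⟩
        · rw [← single_inj heq] at hE
          rw [← single_inj heq2] at hE'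
          exact ih₁ hE hE'
        · exact absurd heq2 (single_ne_cons _ _ _)
      · exact absurd heq (single_ne_cons _ _ _)
    · rcases execSeq_dest es₀ with ⟨σ₁, heq, _⟩ | ⟨σ₁, t, t', heq, rfl, hs⟩
      · exact absurd heq.symm (single_ne_cons _ _ _)
      · rcases execSeq_dest es₀' with ⟨σ₂, heq2, _⟩ | ⟨σ₂, v, v', heq2, rfl, hs'⟩
        · exact absurd heq2.symm (single_ne_cons _ _ _)
        · obtain ⟨eσ, et⟩ := cons_inj heq
          obtain ⟨eσ', et'⟩ := cons_inj heq2
          subst eσ et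
          subst et'
          refine Or.inr ⟨σ₀, t', v', rfl, by rw [eσ'], DetB.espair hs hs' hB⟩
  | ifte e st sf ihT ihF =>
    intro σ τ τ' h h'
    rcases exec_ifte_dest h with ⟨he, hs⟩ | ⟨he, hs⟩ <;>
      rcases exec_ifte_dest h' with ⟨he', hs'⟩ | ⟨he', hs'⟩
    case ifte.inl.inr => exact absurd he he'
    case ifte.inr.inl => exact absurd he' he
    all_goals {
      rcases execSeq_dest hs with ⟨σ₁, heq, _⟩ | ⟨σ₁, t, t', heq, rfl, hu⟩
      · exact absurd heq.symm (single_ne_cons _ _ _)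
      rcases execSeq_dest hs' with ⟨σ₂, heq2, _⟩ | ⟨σ₂, v, v', heq2, rfl, hu'⟩
      · exact absurd heq2.symm (single_ne_cons _ _ _)
      obtain ⟨eσ, et⟩ := cons_inj heq
      obtain ⟨eσ', et'⟩ := cons_inj heq2
      subst eσ et
      subst et'
      exact Or.inr ⟨σ, t', v', rfl, by rw [eσ'], DetB.espair hu hu' (DetB.refl _)⟩ }
  | whileDo e st ih =>
    intro σ τ τ' h h'
    rcases exec_while_dest h with ⟨he, τm, hm, hw⟩ | ⟨he, rfl⟩ <;>
      rcases exec_while_dest h' with ⟨he', τm', hm', hw'⟩ | ⟨he', rfl⟩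
    case whileDo.inl.inr => exact absurd he he'
    case whileDo.inr.inl => exact absurd he' he
    case whileDo.inr.inr => exact Or.inr ⟨σ, _, _, rfl, rfl, DetB.refl _⟩
    rcases execSeq_dest hm with ⟨σ₁, heq, _⟩ | ⟨σ₁, t, t', heq, rfl, hbody⟩
    · exact absurd heq.symm (single_ne_cons _ _ _)
    rcases execSeq_dest hm' with ⟨σ₂, heq2, _⟩ | ⟨σ₂, v, v', heq2, rfl, hbody'⟩
    · exact absurd heq2.symm (single_ne_cons _ _ _)
    obtain ⟨eσ, et⟩ := cons_inj heq
    obtain ⟨eσ', et'⟩ := cons_inj heq2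
    subst eσ et
    rcases execSeq_dest hw with ⟨σ₃, heq3, _⟩ | ⟨σ₃, w, w', heq3, rfl, hrest⟩
    · exact absurd heq3.symm (single_ne_cons _ _ _)
    rcases execSeq_dest hw' with ⟨σ₄, heq4, _⟩ | ⟨σ₄, z, z', heq4, rfl, hrest'⟩
    · exact absurd heq4.symm (single_ne_cons _ _ _)
    obtain ⟨fσ, ft⟩ := cons_inj heq3
    obtain ⟨fσ', ft'⟩ := cons_inj heq4
    subst ft
    subst ft'
    refine Or.inr ⟨σ, w', z', by rw [fσ], by rw [← fσ', ← eσ'],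
      DetB.espair hrest hrest' (DetB.espair hbody hbody' ?_)⟩
    rw [← et']
    exact DetB.refl _
lemma stepD_detB : ∀ {τ τ' : Trace}, DetB τ τ' → StepD τ τ' := by
  intro τ τ' h
  induction h with
  | refl τ =>
    rcases trace_cases τ with ⟨σ, rfl⟩ | ⟨σ, t, rfl⟩
    · exact Or.inl ⟨σ, rfl, rfl⟩
    · exact Or.inr ⟨σ, t, t, rfl, rfl, DetB.refl _⟩
  | epair h h' => exact stepD_exec _ h h'
  | espair h h' _ ih =>
    rcases ih with ⟨σ, rfl, rfl⟩ | ⟨σ, t, t', rfl, rfl, hB⟩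
    · rcases execSeq_dest h with ⟨σ₁, heq, hE⟩ | ⟨σ₁, u, u', heq, _, _⟩
      · rcases execSeq_dest h' with ⟨σ₂, heq2, hE'⟩ | ⟨σ₂, v, v', heq2, _, _⟩
        · rw [← single_inj heq] at hE
          rw [← single_inj heq2] at hE'
          exact stepD_exec _ hE hE'
        · exact absurd heq2 (single_ne_cons _ _ _)
      · exact absurd heq (single_ne_cons _ _ _)
    · rcases execSeq_dest h with ⟨σ₁, heq, _⟩ | ⟨σ₁, u, u', heq, rfl, hu⟩
      · exact absurd heq.symm (single_ne_cons _ _ _)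
      · rcases execSeq_dest h' with ⟨σ₂, heq2, _⟩ | ⟨σ₂, v, v', heq2, rfl, hv⟩
        · exact absurd heq2.symm (single_ne_cons _ _ _)
        · obtain ⟨eσ, et⟩ := cons_inj heq
          obtain ⟨eσ', et'⟩ := cons_inj heq2
          subst eσ et
          subst et'
          exact Or.inr ⟨σ, u', v', rfl, by rw [← eσ'], DetB.espair hu hv hB⟩

lemma exec_det {s : Stmt} {σ : State} {τ τ' : Trace}
    (h : Exec s σ τ) (h' : Exec s σ τ') : Bisim τ τ' :=
  ⟨DetB, DetB.epair h h', fun _ _ hab => stepD_detB hab⟩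

/-! #### Building extended executions from Follows -/

lemma execSeq_of_follows {s : Stmt} {Q : TracePred}
    (hQ : ∀ τ'', Q τ'' → Exec s τ''.hd τ'') {τ τ' : Trace}
    (h : Follows Q τ τ') : ExecSeq s τ τ' := by
  refine ⟨EE (fun _ _ _ => False), ESE (fun s' a b => s' = s ∧ Follows Q a b),
    consistent_extend _ _ ?_ ?_ ?_ ?_ ?_ ?_, Or.inr ⟨rfl, h⟩⟩
  · rintro _ _ _ _ ⟨⟩
  · rintro _ _ ⟨⟩
  · rintro _ _ _ _ ⟨⟩
  · rintro _ _ _ _ _ ⟨⟩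
  · rintro _ _ _ _ ⟨⟩
  · rintro s' a b ⟨rfl, hf⟩
    rcases follows_dest hf with ⟨σ, rfl, hhd, hq⟩ | ⟨σ, t, t', rfl, rfl, hf'⟩
    · refine Or.inl ⟨σ, rfl, Or.inl ?_⟩
      rw [← hhd]
      exact hQ _ hq
    · exact Or.inr ⟨σ, t, t', rfl, rfl, Or.inr ⟨rfl, hf'⟩⟩

/-! #### The core while-loop coinduction -/

lemma exec_while_of_chop {e : Expr} {st : Stmt} {B DI : TracePred}
    (hB : ∀ τ, B τ → istrue e τ.hd ∧ Exec st τ.hd τ)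
    (hDI : ∀ d, DI d → ∃ σ, d = Trace.cons σ (Trace.single σ)) :
    ∀ τ₁' : Trace, Chop (Iter (Chop B DI)) (Sglt fun σ => ¬ istrue e σ) τ₁' →
      Exec (.whileDo e st) τ₁'.hd (Trace.cons τ₁'.hd τ₁') := by
  set NE : TracePred := Sglt fun σ => ¬ istrue e σ with hNEdef
  set R : TracePred := Chop B DI with hRdef
  set W : TracePred := Chop (Iter R) NE with hWdef
  set N : Stmt → State → Trace → Prop :=
    fun s' σ t => s' = .whileDo e st ∧ ∃ τ₁', t = Trace.cons σ τ₁' ∧ τ₁'.hd = σ ∧ W τ₁'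
    with hNdef
  set M : Stmt → Trace → Trace → Prop :=
    fun s' a b => s' = .whileDo e st ∧
      ∃ τb' τi, Follows DI a τb' ∧ Follows (Iter R) τb' τi ∧ Follows NE τi b
    with hMdef
  have hcons : EvalConsistent (EE N) (ESE M) := by
    refine consistent_extend _ _ ?_ ?_ ?_ ?_ ?_ ?_
    · rintro _ _ _ _ ⟨⟨⟩, _⟩
    · rintro _ _ ⟨⟨⟩, _⟩
    · rintro _ _ _ _ ⟨⟨⟩, _⟩
    · rintro _ _ _ _ _ ⟨⟨⟩, _⟩
    · rintro e' st' σ τ' ⟨heq, τ₁', rfl, hhd, hW⟩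
      obtain ⟨he, hst⟩ : e' = e ∧ st' = st := by
        injection heq with a b; exact ⟨a, b⟩
      subst he hst
      obtain ⟨τi, hIter, hNE⟩ := hW
      rcases iter_dest hIter with ⟨σ₀, rfl⟩ | ⟨τb', hR, hFi⟩
      · -- trivial iteration: loop guard is false
        rcases follows_dest hNE with ⟨σ₀', heqs, hhd', hne⟩ | ⟨_, _, _, heqs, _, _⟩
        · obtain ⟨σ', hfalse, rfl⟩ := hne
          have : σ' = σ := by rw [← hhd]; rfl
          subst this
          exact Or.inr ⟨hfalse, rfl⟩
        · exact absurd heqs (single_ne_cons _ _ _)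
      · -- a genuine iteration
        obtain ⟨τb, hBτb, hFD⟩ := hR
        obtain ⟨het, hexb⟩ := hB τb hBτb
        have hhdb : τb.hd = σ := by
          rw [← hhd, follows_hd hNE, follows_hd hFi, follows_hd hFD]
        rw [hhdb] at het hexb
        refine Or.inl ⟨het, Trace.cons σ τb, Or.inl ?_, Or.inr ⟨rfl, ?_⟩⟩
        · exact execSeq_fold (ESStep.cons σ (execSeq_fold (ESStep.single hexb)))
        · exact ⟨Trace.cons σ τb', Trace.cons σ τi,
            follows_cons σ hFD, follows_cons σ hFi, follows_cons σ hNE⟩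
    · rintro s' a b ⟨rfl, τb', τi, hFD, hFi, hNE⟩
      rcases follows_dest hFD with ⟨σ₂, rfl, hhd', hdi⟩ | ⟨σ₀, a₀, t, rfl, rfl, hFD'⟩
      · -- the body trace ran out: continue with the next loop iteration
        obtain ⟨σ₂', hdeq⟩ := hDI _ hdi
        have : σ₂' = σ₂ := by rw [← hhd', hdeq]; rfl
        subst this
        subst hdeq
        rcases follows_dest hFi with ⟨_, heqs, _, _⟩ | ⟨σ₃, _, ti, heqs, rfl, hFi₁⟩
        · exact absurd heqs.symm (single_ne_cons _ _ _)
        obtain ⟨eσ, et⟩ := cons_inj heqs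
        subst et
        rcases follows_dest hFi₁ with ⟨σ₄, heqs2, hhd2, hIter⟩ | ⟨_, _, _, heqs2, _, _⟩
        · rcases follows_dest hNE with ⟨_, heqs3, _, _⟩ | ⟨σ₅, _, b₁, heqs3, rfl, hNE₁⟩
          · exact absurd heqs3.symm (single_ne_cons _ _ _)
          obtain ⟨fσ, ft⟩ := cons_inj heqs3
          subst ft
          refine Or.inl ⟨σ₂', rfl, Or.inr ⟨rfl, b₁, by rw [← fσ, ← eσ], ?_, ti, hIter, hNE₁⟩⟩
          rw [follows_hd hNE₁, hhd2]
          exact (single_inj heqs2).symm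
        · exact absurd heqs2 (single_ne_cons _ _ _)
      · -- copy one state
        rcases follows_dest hFi with ⟨_, heqs, _, _⟩ | ⟨σ₁, _, ti, heqs, rfl, hFi'⟩
        · exact absurd heqs.symm (single_ne_cons _ _ _)
        obtain ⟨eσ, et⟩ := cons_inj heqs
        subst et
        rcases follows_dest hNE with ⟨_, heqs2, _, _⟩ | ⟨σ₂, _, b₀, heqs2, rfl, hNE'⟩
        · exact absurd heqs2.symm (single_ne_cons _ _ _)
        obtain ⟨fσ, ft⟩ := cons_inj heqs2
        subst ft
        refine Or.inr ⟨σ₀, a₀, b₀, rfl, by rw [← fσ, ← eσ],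
          Or.inr ⟨rfl, t, ti, hFD', hFi', hNE'⟩⟩
  intro τ₁' hW
  exact ⟨EE N, ESE M, hcons, Or.inr ⟨rfl, τ₁', rfl, rfl, hW⟩⟩
/-! #### The main lemma: the strongest trace postcondition is derivable -/

/-- Finitely many terminating loop iterations. -/
inductive Iterates (e : Expr) (st : Stmt) : State → State → Prop
  | refl (σ : State) : Iterates e st σ σ
  | step {σ σ₁ σ₂ : State} {τ : Trace} :
      Iterates e st σ σ₁ → istrue e σ₁ → Exec st σ₁ τ → Converges τ σ₂ →
      Iterates e st σ σ₂

theorem tHoare_sem (s : Stmt) : ∀ U : StatePred,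
    THoare U s (fun τ => ∃ σ, U σ ∧ Exec s σ τ) := by
  induction s with
  | assign x e =>
    intro U
    refine THoare.conseq (fun σ h => h) (THoare.assign U x e) ?_
    rintro τ ⟨σ, hU, rfl⟩
    exact ⟨σ, hU, exec_fold (EStep.assign x e σ)⟩
  | skip =>
    intro U
    refine THoare.conseq (fun σ h => h) (THoare.skip U) ?_
    rintro τ ⟨σ, hU, rfl⟩
    exact ⟨σ, hU, exec_fold (EStep.skip σ)⟩
  | seq s₀ s₁ ih₀ ih₁ =>
    intro U
    refine THoare.conseq (fun σ h => h)
      (THoare.seq (V := fun σ' => ∃ τ σ, U σ ∧ Exec s₀ σ τ ∧ Converges τ σ')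
        (P := fun τ => ∃ σ, U σ ∧ Exec s₀ σ τ)
        (THoare.conseq (fun σ h => h) (ih₀ U) ?_) (ih₁ _)) ?_
    · rintro τ ⟨σ, hU, hex⟩
      exact ⟨τ, ⟨σ, hU, hex⟩,
        follows_self fun σ' hc => ⟨σ', ⟨τ, σ, hU, hex, hc⟩, rfl⟩⟩
    · rintro τ' ⟨τ, ⟨σ, hU, hex⟩, hf⟩
      refine ⟨σ, hU, exec_fold (EStep.seq hex (execSeq_of_follows ?_ hf))⟩
      rintro τ'' ⟨σ₁, hV, hex₁⟩
      rw [exec_hd s₁ hex₁]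
      exact hex₁
  | ifte e st sf ihT ihF =>
    intro U
    refine THoare.conseq (fun σ h => h)
      (THoare.ifte
        (P := fun τ => (∃ σ, istrue e σ ∧ U σ ∧ Exec st σ τ) ∨
          (∃ σ, ¬ istrue e σ ∧ U σ ∧ Exec sf σ τ))
        (THoare.conseq (fun σ h => h) (ihT _) ?_)
        (THoare.conseq (fun σ h => h) (ihF _) ?_)) ?_
    · rintro τ ⟨σ, ⟨he, hU⟩, hex⟩
      exact Or.inl ⟨σ, he, hU, hex⟩
    · rintro τ ⟨σ, ⟨he, hU⟩, hex⟩
      exact Or.inr ⟨σ, he, hU, hex⟩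
    · rintro τ' ⟨τ₀, ⟨σ, hU, rfl⟩, hf⟩
      rcases follows_dest hf with ⟨σ', heq, _, _⟩ | ⟨σ', t, t', heq, rfl, hf'⟩
      · exact absurd heq.symm (single_ne_cons _ _ _)
      obtain ⟨eσ, et⟩ := cons_inj heq
      subst et
      rcases follows_dest hf' with ⟨σ'', heq2, hhd, hP⟩ | ⟨_, _, _, heq2, _, _⟩
      · rw [← single_inj heq2] at hhd
        rcases hP with ⟨σ₁, he, hU₁, hex⟩ | ⟨σ₁, he, hU₁, hex⟩
        · have hσ₁ : σ₁ = σ := by rw [← hhd, exec_hd st hex]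
          rw [hσ₁] at he hex
          refine ⟨σ, hU, ?_⟩
          rw [← eσ]
          exact exec_fold (EStep.ifT he
            (execSeq_fold (ESStep.cons σ (execSeq_fold (ESStep.single hex)))))
        · have hσ₁ : σ₁ = σ := by rw [← hhd, exec_hd sf hex]
          rw [hσ₁] at he hex
          refine ⟨σ, hU, ?_⟩
          rw [← eσ]
          exact exec_fold (EStep.ifF he
            (execSeq_fold (ESStep.cons σ (execSeq_fold (ESStep.single hex)))))
      · exact absurd heq2 (single_ne_cons _ _ _)
  | whileDo e st ih =>
    intro U
    have hbody : THoare (fun σ => istrue e σ ∧ (fun σ' => ∃ σ₀, U σ₀ ∧ Iterates e st σ₀ σ') σ) st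
        (Chop (fun τ => ∃ σ₁, istrue e σ₁ ∧ (∃ σ₀, U σ₀ ∧ Iterates e st σ₀ σ₁) ∧ Exec st σ₁ τ)
          (Sglt fun σ' => ∃ σ₀, U σ₀ ∧ Iterates e st σ₀ σ')) := by
      refine THoare.conseq (fun σ h => h) (ih _) ?_
      rintro τ ⟨σ₁, ⟨he, hI⟩, hex⟩
      refine ⟨τ, ⟨σ₁, he, hI, hex⟩, follows_self ?_⟩
      rintro σ₂ hc
      obtain ⟨σ₀, hU₀, hit⟩ := hI
      exact ⟨σ₂, ⟨σ₀, hU₀, Iterates.step hit he hex hc⟩, rfl⟩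
    have hmain := THoare.whileDo (U := U) (fun σ hU => ⟨σ, hU, Iterates.refl σ⟩) hbody
    refine THoare.conseq (fun σ h => h) hmain ?_
    rintro τ' ⟨τ₀, ⟨σ, hU, rfl⟩, hf⟩
    rcases follows_dest hf with ⟨σ', heq, _, _⟩ | ⟨σ', t, t', heq, rfl, hf'⟩
    · exact absurd heq.symm (single_ne_cons _ _ _)
    obtain ⟨eσ, et⟩ := cons_inj heq
    subst et
    rcases follows_dest hf' with ⟨σ'', heq2, hhd, hW⟩ | ⟨_, _, _, heq2, _, _⟩
    · rw [← single_inj heq2] at hhd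
      have hcore := exec_while_of_chop (e := e) (st := st)
        (B := fun τ => ∃ σ₁, istrue e σ₁ ∧ (∃ σ₀, U σ₀ ∧ Iterates e st σ₀ σ₁) ∧ Exec st σ₁ τ)
        (DI := Dup fun σ' => ∃ σ₀, U σ₀ ∧ Iterates e st σ₀ σ') ?_ ?_ t' hW
      · rw [hhd] at hcore
        refine ⟨σ, hU, ?_⟩
        rw [← eσ]
        exact hcore
      · rintro τ ⟨σ₁, he, hI, hex⟩
        rw [exec_hd st hex]
        exact ⟨he, hex⟩
      · rintro d ⟨σ₂, _, rfl⟩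
        exact ⟨σ₂, rfl⟩
    · exact absurd heq2 (single_ne_cons _ _ _)

/-- Total-correctness completeness of the trace-based Hoare logic. -/
theorem tHoare_complete_total (s : Stmt) (U : StatePred) (P : TracePred)
    (hP : IsSetoidPred P)
    (h : ∀ σ : State, U σ → ∃ τ : Trace, Exec s σ τ ∧ P τ) :
    THoare U s P := by
  refine THoare.conseq (fun σ hu => hu) (tHoare_sem s U) ?_
  rintro τ ⟨σ, hU, hex⟩
  obtain ⟨τ₀, hex₀, hPτ₀⟩ := h σ hU
  exact hP _ _ hPτ₀ (exec_det hex₀ hex)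

end WhileTrace
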